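/- Fix real constants δ > 0 and C > 0. Let D : ℕ → ℕ be a sequence with D(n)·(log log n / log n)² → 0 as n → ∞. Suppose for each n, φ_n assigns a real number to each set α of unordered pairs of distinct elements of {1,…,n}, such that |φ_n(α)| ≤ n^{−(1+δ)·|V(α)|/2} · (|α|+1)^{C·|α|} for every α with 1 ≤ |α| ≤ D(n). Then Σ_{α : 1 ≤ |α| ≤ D(n)} φ_n(α)² → 0 as n → ∞. -/

import Mathlib

open Finset

/-- Unordered pairs of distinct elements of `Fin n`, encoded as ordered pairs `(i,j)` with `i < j`. -/
abbrev Edge (n : ℕ) := {p : Fin n × Fin n // p.1 < p.2}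

/-- `V(α)`: the set of vertices incident to at least one pair of `α`. -/
def vertexSet {n : ℕ} (α : Finset (Edge n)) : Finset (Fin n) :=
  α.biUnion (fun e => {e.val.1, e.val.2})

namespace Stmt15Aux

open Real Filter

variable {n : ℕ}

lemma mem_vertexSet_fst {α : Finset (Edge n)} {e : Edge n} (he : e ∈ α) :
    e.val.1 ∈ vertexSet α := Finset.mem_biUnion.2 ⟨e, he, by simp⟩

lemma mem_vertexSet_snd {α : Finset (Edge n)} {e : Edge n} (he : e ∈ α) :
    e.val.2 ∈ vertexSet α := Finset.mem_biUnion.2 ⟨e, he, by simp⟩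

lemma two_le_card_vertexSet {α : Finset (Edge n)} (hα : α.Nonempty) :
    2 ≤ (vertexSet α).card := by
  obtain ⟨e, he⟩ := hα
  have hsub : ({e.val.1, e.val.2} : Finset (Fin n)) ⊆ vertexSet α := by
    intro x hx
    rcases Finset.mem_insert.1 hx with h | h
    · subst h; exact mem_vertexSet_fst he
    · rw [Finset.mem_singleton] at h; subst h; exact mem_vertexSet_snd he
  calc 2 = ({e.val.1, e.val.2} : Finset (Fin n)).card :=
        (Finset.card_pair (ne_of_lt e.2)).symm
    _ ≤ _ := Finset.card_le_card hsub

lemma card_vertexSet_le (α : Finset (Edge n)) : (vertexSet α).card ≤ 2 * α.card := by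
  calc (vertexSet α).card ≤ ∑ e ∈ α, ({e.val.1, e.val.2} : Finset (Fin n)).card :=
        Finset.card_biUnion_le
    _ ≤ ∑ _e ∈ α, 2 := Finset.sum_le_sum (fun e _ => (Finset.card_insert_le _ _).trans (by simp))
    _ = 2 * α.card := by rw [Finset.sum_const, smul_eq_mul, mul_comm]

def edgesIn (V : Finset (Fin n)) : Finset (Edge n) :=
  Finset.univ.filter (fun e => e.val.1 ∈ V ∧ e.val.2 ∈ V)

lemma subset_edgesIn (α : Finset (Edge n)) : α ⊆ edgesIn (vertexSet α) := by
  intro e he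
  simp only [edgesIn, Finset.mem_filter, Finset.mem_univ, true_and]
  exact ⟨mem_vertexSet_fst he, mem_vertexSet_snd he⟩

lemma card_edgesIn_le (V : Finset (Fin n)) : (edgesIn V).card ≤ V.card ^ 2 := by
  have h : (edgesIn V).card ≤ (V ×ˢ V).card := by
    apply Finset.card_le_card_of_injOn (fun e => e.val)
    · intro e he
      simp only [edgesIn, Finset.mem_coe, Finset.mem_filter] at he
      exact Finset.mem_product.2 he.2
    · intro a _ b _ hab
      exact Subtype.ext hab
  simpa [Finset.card_product, sq] using h

lemma card_le_sq_card_vertexSet (α : Finset (Edge n)) : α.card ≤ (vertexSet α).card ^ 2 :=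
  (Finset.card_le_card (subset_edgesIn α)).trans (card_edgesIn_le _)


set_option maxHeartbeats 2000000 in
lemma counting (hn : 1 ≤ n) (k : ℕ) :
    ∑ α ∈ Finset.univ.filter (fun α : Finset (Edge n) => α.card = k),
      (n:ℝ) ^ (-((vertexSet α).card : ℝ)) ≤ (2*(k:ℝ)+1) * (2*(k:ℝ))^(2*k) := by
  classical
  have hn0 : (0:ℝ) < n := by exact_mod_cast Nat.lt_of_lt_of_le Nat.zero_lt_one hn
  have hmaps : ∀ α ∈ Finset.univ.filter (fun α : Finset (Edge n) => α.card = k),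
      vertexSet α ∈ (Finset.univ : Finset (Fin n)).powerset :=
    fun α _ => Finset.mem_powerset.2 (Finset.subset_univ _)
  rw [← Finset.sum_fiberwise_of_maps_to hmaps]
  -- per-V bound
  have step1 : ∀ V ∈ (Finset.univ : Finset (Fin n)).powerset,
      ∑ α ∈ (Finset.univ.filter (fun α : Finset (Edge n) => α.card = k)).filter
          (fun α => vertexSet α = V), (n:ℝ) ^ (-((vertexSet α).card : ℝ))
      ≤ (if V.card ≤ 2*k then ((2*(k:ℝ))^(2*k)) * (n:ℝ)^(-(V.card:ℝ)) else 0) := by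
    intro V _
    set F := (Finset.univ.filter (fun α : Finset (Edge n) => α.card = k)).filter
          (fun α => vertexSet α = V) with hF
    have hsum : ∑ α ∈ F, (n:ℝ) ^ (-((vertexSet α).card : ℝ))
        = (F.card : ℝ) * (n:ℝ)^(-(V.card:ℝ)) := by
      rw [Finset.sum_congr rfl (fun α hα => ?_), Finset.sum_const, nsmul_eq_mul]
      have : vertexSet α = V := (Finset.mem_filter.1 hα).2
      rw [this]
    rw [hsum]
    rcases F.eq_empty_or_nonempty with hFe | hFne
    · rw [hFe]
      simp only [Finset.card_empty, Nat.cast_zero, zero_mul]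
      rcases le_or_gt V.card (2*k) with h | h
      · rw [if_pos h]; positivity
      · rw [if_neg (not_le.2 h)]
    · obtain ⟨α₀, hα₀⟩ := hFne
      have hα₀' := Finset.mem_filter.1 hα₀
      have hcard : α₀.card = k := (Finset.mem_filter.1 hα₀'.1).2
      have hV : vertexSet α₀ = V := hα₀'.2
      have hVle : V.card ≤ 2*k := by
        rw [← hV, ← hcard]; exact card_vertexSet_le α₀
      rw [if_pos hVle]
      have hFsub : F ⊆ (edgesIn V).powersetCard k := by
        intro α hα
        have hα' := Finset.mem_filter.1 hα
        have h1 : α.card = k := (Finset.mem_filter.1 hα'.1).2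
        have h2 : vertexSet α = V := hα'.2
        refine Finset.mem_powersetCard.2 ⟨?_, h1⟩
        have := subset_edgesIn α
        rw [h2] at this
        exact this
      have hFcard : (F.card : ℝ) ≤ (2*(k:ℝ))^(2*k) := by
        have h1 : F.card ≤ (edgesIn V).card.choose k :=
          (Finset.card_le_card hFsub).trans_eq (Finset.card_powersetCard k _)
        have h2 : (edgesIn V).card.choose k ≤ (edgesIn V).card ^ k :=
          Nat.choose_le_pow _ _
        have h3 : (edgesIn V).card ^ k ≤ (V.card ^ 2) ^ k :=
          Nat.pow_le_pow_left (card_edgesIn_le V) k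
        have h4 : (V.card ^ 2) ^ k ≤ (2*k)^(2*k) := by
          calc (V.card ^ 2) ^ k ≤ ((2*k)^2)^k := Nat.pow_le_pow_left (Nat.pow_le_pow_left hVle 2) k
            _ = (2*k)^(2*k) := (pow_mul _ 2 k).symm
        have : F.card ≤ (2*k)^(2*k) := le_trans h1 (le_trans h2 (le_trans h3 h4))
        calc (F.card : ℝ) ≤ ((2*k)^(2*k) : ℕ) := by exact_mod_cast this
          _ = (2*(k:ℝ))^(2*k) := by push_cast; ring
      exact mul_le_mul_of_nonneg_right hFcard (le_of_lt (Real.rpow_pos_of_pos hn0 _))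
  calc ∑ V ∈ (Finset.univ : Finset (Fin n)).powerset, ∑ α ∈ _, (n:ℝ) ^ (-((vertexSet α).card : ℝ))
      ≤ ∑ V ∈ (Finset.univ : Finset (Fin n)).powerset,
        (if V.card ≤ 2*k then ((2*(k:ℝ))^(2*k)) * (n:ℝ)^(-(V.card:ℝ)) else 0) :=
        Finset.sum_le_sum step1
    _ ≤ (2*(k:ℝ)+1) * (2*(k:ℝ))^(2*k) := by
        rw [Finset.sum_powerset]
        have hcardu : (Finset.univ : Finset (Fin n)).card = n := by simp
        rw [hcardu]
        have inner_eq : ∀ j ∈ Finset.range (n+1),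
            ∑ V ∈ Finset.powersetCard j (Finset.univ : Finset (Fin n)),
              (if V.card ≤ 2*k then ((2*(k:ℝ))^(2*k)) * (n:ℝ)^(-(V.card:ℝ)) else 0)
            = (n.choose j : ℝ) * (if j ≤ 2*k then ((2*(k:ℝ))^(2*k)) * (n:ℝ)^(-(j:ℝ)) else 0) := by
          intro j _
          rw [Finset.sum_congr rfl (fun V hV => ?_), Finset.sum_const, nsmul_eq_mul,
            Finset.card_powersetCard, hcardu]
          have : V.card = j := (Finset.mem_powersetCard.1 hV).2
          rw [this]
        rw [Finset.sum_congr rfl inner_eq]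
        have term_le : ∀ j ∈ Finset.range (n+1),
            (n.choose j : ℝ) * (if j ≤ 2*k then ((2*(k:ℝ))^(2*k)) * (n:ℝ)^(-(j:ℝ)) else 0)
            ≤ (if j ≤ 2*k then ((2*(k:ℝ))^(2*k)) else 0) := by
          intro j _
          rcases le_or_gt j (2*k) with h | h
          case _ =>
            rw [if_pos h, if_pos h]
            rw [← mul_assoc, mul_comm (n.choose j : ℝ), mul_assoc]
            have h1 : (n.choose j : ℝ) * (n:ℝ)^(-(j:ℝ)) ≤ 1 := by
              rw [Real.rpow_neg (le_of_lt hn0)]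
              rw [mul_inv_le_iff₀ (by positivity), one_mul]
              rw [Real.rpow_natCast]
              exact_mod_cast Nat.choose_le_pow n j
            calc ((2*(k:ℝ))^(2*k)) * ((n.choose j : ℝ) * (n:ℝ)^(-(j:ℝ)))
                ≤ ((2*(k:ℝ))^(2*k)) * 1 := by
                  apply mul_le_mul_of_nonneg_left h1 (by positivity)
              _ = ((2*(k:ℝ))^(2*k)) := mul_one _
          case _ =>
            rw [if_neg (not_le.2 h), if_neg (not_le.2 h)]
            simp
        calc ∑ j ∈ Finset.range (n+1), (n.choose j : ℝ) *
              (if j ≤ 2*k then ((2*(k:ℝ))^(2*k)) * (n:ℝ)^(-(j:ℝ)) else 0)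
            ≤ ∑ j ∈ Finset.range (n+1), (if j ≤ 2*k then ((2*(k:ℝ))^(2*k)) else 0) :=
              Finset.sum_le_sum term_le
          _ = ∑ j ∈ (Finset.range (n+1)).filter (fun j => j ≤ 2*k), ((2*(k:ℝ))^(2*k)) :=
              (Finset.sum_filter _ _).symm
          _ ≤ (2*(k:ℝ)+1) * (2*(k:ℝ))^(2*k) := by
              rw [Finset.sum_const, nsmul_eq_mul]
              apply mul_le_mul_of_nonneg_right _ (by positivity)
              have hsub : (Finset.range (n+1)).filter (fun j => j ≤ 2*k) ⊆ Finset.range (2*k+1) := by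
                intro j hj
                have := (Finset.mem_filter.1 hj).2
                exact Finset.mem_range.2 (Nat.lt_succ_of_le this)
              calc (((Finset.range (n+1)).filter (fun j => j ≤ 2*k)).card : ℝ)
                  ≤ ((Finset.range (2*k+1)).card : ℝ) := by
                    exact_mod_cast Finset.card_le_card hsub
                _ = 2*(k:ℝ)+1 := by push_cast [Finset.card_range]; ring

lemma pow_bound {δ C : ℝ} (hδ : 0 < δ) (hC : 0 < C) {n k Dn : ℕ} (hk : 1 ≤ k) (hkD : k ≤ Dn)
    (hn : 2 ≤ n)
    (hmain : (2*C+3) * Real.sqrt Dn * Real.log (2*Dn+2) ≤ (δ/2) * Real.log n) :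
    ((k:ℝ)+1)^(2*C*(k:ℝ)) * ((2*(k:ℝ)+1) * (2*(k:ℝ))^(2*k)) ≤ (n:ℝ)^((δ/2) * Real.sqrt k) := by
  have hk1 : (1:ℝ) ≤ (k:ℝ) := by exact_mod_cast hk
  have hb0 : (0:ℝ) < 2*(k:ℝ)+2 := by linarith
  have hb1 : (1:ℝ) ≤ 2*(k:ℝ)+2 := by linarith
  have hn0 : (0:ℝ) < n := by positivity
  have hn1 : (1:ℝ) < n := by exact_mod_cast hn
  have hCk : (0:ℝ) ≤ 2*C*(k:ℝ) := by positivity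
  have A1 : ((k:ℝ)+1)^(2*C*(k:ℝ)) ≤ (2*(k:ℝ)+2)^(2*C*(k:ℝ)) :=
    Real.rpow_le_rpow (by linarith) (by linarith) hCk
  have A2 : 2*(k:ℝ)+1 ≤ (2*(k:ℝ)+2)^(1:ℝ) := by rw [Real.rpow_one]; linarith
  have A3 : (2*(k:ℝ))^(2*k) ≤ (2*(k:ℝ)+2)^((2*k : ℕ):ℝ) := by
    rw [Real.rpow_natCast]
    exact pow_le_pow_left₀ (by linarith) (by linarith) _
  have step1 : ((k:ℝ)+1)^(2*C*(k:ℝ)) * ((2*(k:ℝ)+1) * (2*(k:ℝ))^(2*k))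
      ≤ (2*(k:ℝ)+2)^(2*C*(k:ℝ) + 1 + ((2*k : ℕ):ℝ)) := by
    rw [Real.rpow_add hb0, Real.rpow_add hb0]
    have h23 : (0:ℝ) ≤ (2*(k:ℝ)+1) * (2*(k:ℝ))^(2*k) := by positivity
    calc ((k:ℝ)+1)^(2*C*(k:ℝ)) * ((2*(k:ℝ)+1) * (2*(k:ℝ))^(2*k))
        ≤ (2*(k:ℝ)+2)^(2*C*(k:ℝ)) * ((2*(k:ℝ)+2)^(1:ℝ) * (2*(k:ℝ)+2)^((2*k : ℕ):ℝ)) := by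
          apply mul_le_mul A1 (mul_le_mul A2 A3 (by positivity) (by positivity)) h23 (by positivity)
      _ = (2*(k:ℝ)+2)^(2*C*(k:ℝ)) * (2*(k:ℝ)+2)^(1:ℝ) * (2*(k:ℝ)+2)^((2*k : ℕ):ℝ) := by ring
  have step2 : (2*(k:ℝ)+2)^(2*C*(k:ℝ) + 1 + ((2*k : ℕ):ℝ))
      ≤ (2*(k:ℝ)+2)^((2*C+3)*(k:ℝ)) := by
    apply Real.rpow_le_rpow_of_exponent_le hb1
    push_cast
    nlinarith
  have hksqrt : (k:ℝ) = Real.sqrt k * Real.sqrt k := (Real.mul_self_sqrt (by positivity)).symm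
  have hsqrtk_nonneg : (0:ℝ) ≤ Real.sqrt k := Real.sqrt_nonneg _
  have hlogb_nonneg : (0:ℝ) ≤ Real.log (2*(k:ℝ)+2) := Real.log_nonneg hb1
  have key : (2*C+3) * Real.sqrt k * Real.log (2*(k:ℝ)+2) ≤ (δ/2) * Real.log n := by
    have m1 : Real.sqrt (k:ℝ) ≤ Real.sqrt (Dn:ℝ) := Real.sqrt_le_sqrt (by exact_mod_cast hkD)
    have m2 : Real.log (2*(k:ℝ)+2) ≤ Real.log (2*(Dn:ℝ)+2) := by
      apply Real.log_le_log hb0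
      have : (k:ℝ) ≤ Dn := by exact_mod_cast hkD
      linarith
    calc (2*C+3) * Real.sqrt k * Real.log (2*(k:ℝ)+2)
        ≤ (2*C+3) * Real.sqrt Dn * Real.log (2*(Dn:ℝ)+2) := by
          apply mul_le_mul (mul_le_mul_of_nonneg_left m1 (by linarith)) m2 hlogb_nonneg
          positivity
      _ ≤ (δ/2) * Real.log n := hmain
  have step3 : (2*(k:ℝ)+2)^((2*C+3)*(k:ℝ)) ≤ (n:ℝ)^((δ/2) * Real.sqrt k) := by
    rw [Real.rpow_def_of_pos hb0, Real.rpow_def_of_pos hn0, Real.exp_le_exp]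
    calc Real.log (2*(k:ℝ)+2) * ((2*C+3)*(k:ℝ))
        = Real.sqrt k * ((2*C+3) * Real.sqrt k * Real.log (2*(k:ℝ)+2)) := by
          linear_combination ((2*C+3) * Real.log (2*(k:ℝ)+2)) * hksqrt
      _ ≤ Real.sqrt k * ((δ/2) * Real.log n) :=
          mul_le_mul_of_nonneg_left key hsqrtk_nonneg
      _ = Real.log n * ((δ/2) * Real.sqrt k) := by ring
  exact le_trans step1 (le_trans step2 step3)

set_option maxHeartbeats 2000000 in
lemma main_bound {δ C : ℝ} (hδ : 0 < δ) (Dn : ℕ) {n : ℕ} (hn : 2 ≤ n)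
    (φn : Finset (Edge n) → ℝ)
    (hφ : ∀ α : Finset (Edge n), 1 ≤ α.card → α.card ≤ Dn →
      |φn α| ≤ (n : ℝ) ^ (-(1 + δ) * ((vertexSet α).card : ℝ) / 2) *
        ((α.card : ℝ) + 1) ^ (C * (α.card : ℝ)))
    (hG : ∀ k : ℕ, 1 ≤ k → k ≤ Dn →
      ((k:ℝ)+1)^(2*C*(k:ℝ)) * ((2*(k:ℝ)+1) * (2*(k:ℝ))^(2*k)) ≤ (n:ℝ)^((δ/2) * Real.sqrt k)) :
    ∑ α ∈ Finset.univ.filter (fun α : Finset (Edge n) => 1 ≤ α.card ∧ α.card ≤ Dn), (φn α)^2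
      ≤ (n:ℝ)^(-δ) * Dn := by
  classical
  have hn0 : (0:ℝ) < n := by positivity
  have hn1 : (1:ℝ) ≤ n := by exact_mod_cast Nat.one_le_of_lt hn
  have hmaps : ∀ α ∈ Finset.univ.filter (fun α : Finset (Edge n) => 1 ≤ α.card ∧ α.card ≤ Dn),
      α.card ∈ Finset.Icc 1 Dn := by
    intro α hα
    exact Finset.mem_Icc.2 (Finset.mem_filter.1 hα).2
  rw [← Finset.sum_fiberwise_of_maps_to hmaps]
  have inner : ∀ k ∈ Finset.Icc 1 Dn,
      ∑ α ∈ (Finset.univ.filter (fun α : Finset (Edge n) => 1 ≤ α.card ∧ α.card ≤ Dn)).filter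
          (fun α => α.card = k), (φn α)^2 ≤ (n:ℝ)^(-δ) := by
    intro k hk
    obtain ⟨hk1, hkD⟩ := Finset.mem_Icc.1 hk
    set X : ℝ := (n:ℝ)^(-((δ/2) * Real.sqrt k)) * ((k:ℝ)+1)^(2*C*(k:ℝ)) with hX
    have hXnonneg : 0 ≤ X := by positivity
    -- per-α bound
    have per_α : ∀ α ∈ (Finset.univ.filter
          (fun α : Finset (Edge n) => 1 ≤ α.card ∧ α.card ≤ Dn)).filter (fun α => α.card = k),
        (φn α)^2 ≤ (n:ℝ)^(-δ) * X * (n:ℝ)^(-(((vertexSet α).card : ℝ))) := by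
      intro α hα
      have hα' := Finset.mem_filter.1 hα
      have hcard : α.card = k := hα'.2
      have h1k : 1 ≤ α.card := hcard ▸ hk1
      have hDk : α.card ≤ Dn := hcard ▸ hkD
      have hne : α.Nonempty := Finset.card_pos.1 h1k
      have hv2 : (2:ℝ) ≤ ((vertexSet α).card : ℝ) := by
        exact_mod_cast two_le_card_vertexSet hne
      have hsq : Real.sqrt k ≤ ((vertexSet α).card : ℝ) := by
        have h := card_le_sq_card_vertexSet α
        rw [hcard] at h
        have : ((k:ℝ)) ≤ (((vertexSet α).card : ℝ))^2 := by exact_mod_cast h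
        calc Real.sqrt k ≤ Real.sqrt ((((vertexSet α).card : ℝ))^2) := Real.sqrt_le_sqrt this
          _ = ((vertexSet α).card : ℝ) := Real.sqrt_sq (by positivity)
      set v : ℝ := ((vertexSet α).card : ℝ) with hv
      have habs := hφ α h1k hDk
      have hrhs_nonneg : (0:ℝ) ≤ (n : ℝ) ^ (-(1 + δ) * v / 2) *
          ((α.card : ℝ) + 1) ^ (C * (α.card : ℝ)) := by positivity
      have hsq2 : (φn α)^2 ≤ ((n : ℝ) ^ (-(1 + δ) * v / 2) *
          ((α.card : ℝ) + 1) ^ (C * (α.card : ℝ)))^2 := by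
        rw [← sq_abs]
        exact pow_le_pow_left₀ (abs_nonneg _) habs 2
      have hexpand : ((n : ℝ) ^ (-(1 + δ) * v / 2) *
          ((α.card : ℝ) + 1) ^ (C * (α.card : ℝ)))^2
          = (n : ℝ) ^ (-(1 + δ) * v) * ((k : ℝ) + 1) ^ (2*C*(k:ℝ)) := by
        rw [mul_pow, sq, sq, ← Real.rpow_add hn0, ← Real.rpow_add (by positivity : (0:ℝ) < (α.card:ℝ)+1), hcard]
        ring_nf
      have hsplit : (n : ℝ) ^ (-(1 + δ) * v)
          ≤ (n:ℝ)^(-δ) * (n:ℝ)^(-((δ/2) * Real.sqrt k)) * (n:ℝ)^(-v) := by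
        rw [← Real.rpow_add hn0, ← Real.rpow_add hn0]
        apply Real.rpow_le_rpow_of_exponent_le hn1
        nlinarith [hδ.le]
      calc (φn α)^2 ≤ (n : ℝ) ^ (-(1 + δ) * v) * ((k : ℝ) + 1) ^ (2*C*(k:ℝ)) := by
            rw [← hexpand]; exact hsq2
        _ ≤ ((n:ℝ)^(-δ) * (n:ℝ)^(-((δ/2) * Real.sqrt k)) * (n:ℝ)^(-v)) *
            ((k : ℝ) + 1) ^ (2*C*(k:ℝ)) := by
            apply mul_le_mul_of_nonneg_right hsplit (by positivity)
        _ = (n:ℝ)^(-δ) * X * (n:ℝ)^(-v) := by rw [hX]; ring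
    calc ∑ α ∈ (Finset.univ.filter
          (fun α : Finset (Edge n) => 1 ≤ α.card ∧ α.card ≤ Dn)).filter (fun α => α.card = k),
          (φn α)^2
        ≤ ∑ α ∈ (Finset.univ.filter
          (fun α : Finset (Edge n) => 1 ≤ α.card ∧ α.card ≤ Dn)).filter (fun α => α.card = k),
          (n:ℝ)^(-δ) * X * (n:ℝ)^(-(((vertexSet α).card : ℝ))) := Finset.sum_le_sum per_α
      _ = (n:ℝ)^(-δ) * X * ∑ α ∈ (Finset.univ.filter
          (fun α : Finset (Edge n) => 1 ≤ α.card ∧ α.card ≤ Dn)).filter (fun α => α.card = k),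
          (n:ℝ)^(-(((vertexSet α).card : ℝ))) := by rw [Finset.mul_sum]
      _ ≤ (n:ℝ)^(-δ) * X * ((2*(k:ℝ)+1) * (2*(k:ℝ))^(2*k)) := by
          apply mul_le_mul_of_nonneg_left _ (by positivity)
          refine le_trans (Finset.sum_le_sum_of_subset_of_nonneg ?_ ?_)
            (counting (Nat.one_le_of_lt hn) k)
          · intro α hα
            simp only [Finset.mem_filter] at hα ⊢
            exact ⟨Finset.mem_univ _, hα.2⟩
          · intro α _ _
            positivity
      _ ≤ (n:ℝ)^(-δ) := by
          have hGk := hG k hk1 hkD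
          have h1 : X * ((2*(k:ℝ)+1) * (2*(k:ℝ))^(2*k)) ≤ 1 := by
            rw [hX]
            have : (n:ℝ)^(-((δ/2) * Real.sqrt k)) * ((k:ℝ)+1)^(2*C*(k:ℝ)) *
                ((2*(k:ℝ)+1) * (2*(k:ℝ))^(2*k))
                ≤ (n:ℝ)^(-((δ/2) * Real.sqrt k)) * (n:ℝ)^((δ/2) * Real.sqrt k) := by
              rw [mul_assoc]
              exact mul_le_mul_of_nonneg_left hGk (by positivity)
            calc (n:ℝ)^(-((δ/2) * Real.sqrt k)) * ((k:ℝ)+1)^(2*C*(k:ℝ)) *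
                ((2*(k:ℝ)+1) * (2*(k:ℝ))^(2*k)) ≤
                (n:ℝ)^(-((δ/2) * Real.sqrt k)) * (n:ℝ)^((δ/2) * Real.sqrt k) := this
              _ = 1 := by rw [← Real.rpow_add hn0]; simp
          calc (n:ℝ)^(-δ) * X * ((2*(k:ℝ)+1) * (2*(k:ℝ))^(2*k))
              = (n:ℝ)^(-δ) * (X * ((2*(k:ℝ)+1) * (2*(k:ℝ))^(2*k))) := by ring
            _ ≤ (n:ℝ)^(-δ) * 1 := mul_le_mul_of_nonneg_left h1 (by positivity)
            _ = (n:ℝ)^(-δ) := mul_one _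
  calc ∑ k ∈ Finset.Icc 1 Dn, ∑ α ∈ (Finset.univ.filter
        (fun α : Finset (Edge n) => 1 ≤ α.card ∧ α.card ≤ Dn)).filter (fun α => α.card = k),
        (φn α)^2
      ≤ ∑ _k ∈ Finset.Icc 1 Dn, (n:ℝ)^(-δ) := Finset.sum_le_sum inner
    _ = Dn * (n:ℝ)^(-δ) := by
        rw [Finset.sum_const, nsmul_eq_mul, Nat.card_Icc]
        norm_num
    _ = (n:ℝ)^(-δ) * Dn := mul_comm _ _

end Stmt15Aux

open Stmt15Aux Real Filter in
/-- Fix constants `δ, C > 0` and a sequence `D(n)` of naturals with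
`D(n)·(log log n / log n)² → 0`. If `|φ_n(α)| ≤ n^{−(1+δ)|V(α)|/2}·(|α|+1)^{C|α|}` for
every `α` with `1 ≤ |α| ≤ D(n)`, then `∑_{1 ≤ |α| ≤ D(n)} φ_n(α)² → 0` as `n → ∞`. -/
theorem stmt15 (δ C : ℝ) (hδ : 0 < δ) (hC : 0 < C) (D : ℕ → ℕ)
    (hD : Filter.Tendsto
      (fun n => (D n : ℝ) * (Real.log (Real.log (n : ℝ)) / Real.log (n : ℝ)) ^ 2)
      Filter.atTop (nhds 0))
    (φ : (n : ℕ) → Finset (Edge n) → ℝ)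
    (hφ : ∀ n : ℕ, ∀ α : Finset (Edge n), 1 ≤ α.card → α.card ≤ D n →
      |φ n α| ≤ (n : ℝ) ^ (-(1 + δ) * ((vertexSet α).card : ℝ) / 2) *
        ((α.card : ℝ) + 1) ^ (C * (α.card : ℝ))) :
    Filter.Tendsto
      (fun n => ∑ α ∈ Finset.univ.filter
          (fun α : Finset (Edge n) => 1 ≤ α.card ∧ α.card ≤ D n), (φ n α) ^ 2)
      Filter.atTop (nhds 0) := by
  classical
  set ε : ℝ := min (δ / (6 * (2*C+3))) 1 with hε
  have hεpos : 0 < ε := by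
    apply lt_min _ one_pos
    positivity
  have hε1 : ε ≤ 1 := min_le_right _ _
  have hεδ : 3 * (2*C+3) * ε ≤ δ / 2 := by
    have h1 : ε ≤ δ / (6 * (2*C+3)) := min_le_left _ _
    have h2 : (0:ℝ) < 6 * (2*C+3) := by positivity
    calc 3 * (2*C+3) * ε ≤ 3 * (2*C+3) * (δ / (6 * (2*C+3))) := by
          apply mul_le_mul_of_nonneg_left h1 (by positivity)
      _ = δ / 2 := by field_simp; ring
  -- eventual smallness from hD
  have hev1 : ∀ᶠ n : ℕ in atTop,
      (D n : ℝ) * (Real.log (Real.log (n : ℝ)) / Real.log (n : ℝ)) ^ 2 < ε^2 := by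
    have := hD.eventually (eventually_lt_nhds (by positivity : (0:ℝ) < ε^2))
    exact this
  have hev2 : ∀ᶠ n : ℕ in atTop, 21 ≤ n := eventually_ge_atTop 21
  -- the combined eventual bound
  have hbound : ∀ᶠ n : ℕ in atTop,
      (∑ α ∈ Finset.univ.filter
          (fun α : Finset (Edge n) => 1 ≤ α.card ∧ α.card ≤ D n), (φ n α) ^ 2)
        ≤ (n:ℝ)^(-δ) * (Real.log n)^2 := by
    filter_upwards [hev1, hev2] with n hsmall hn21
    have hn2 : 2 ≤ n := le_trans (by norm_num) hn21
    have hn0 : (0:ℝ) < n := by positivity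
    have hn21' : (21:ℝ) ≤ n := by exact_mod_cast hn21
    -- L ≥ 3
    have hexp3 : Real.exp 3 ≤ 21 := by
      have h1 : Real.exp 1 ≤ 2.7182818286 := (Real.exp_one_lt_d9).le
      have h3 : Real.exp 3 = (Real.exp 1)^3 := by
        rw [← Real.exp_nat_mul]; norm_num
      rw [h3]
      calc (Real.exp 1)^3 ≤ 2.7182818286^3 := by
            apply pow_le_pow_left₀ (Real.exp_pos 1).le h1
        _ ≤ 21 := by norm_num
    set L := Real.log n with hLdef
    have hL3 : 3 ≤ L := by
      rw [hLdef, Real.le_log_iff_exp_le hn0]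
      linarith
    have hL0 : 0 < L := by linarith
    set l := Real.log L with hldef
    have hl1 : 1 ≤ l := by
      rw [hldef, Real.le_log_iff_exp_le hL0]
      have : Real.exp 1 < 2.7182818286 := Real.exp_one_lt_d9
      linarith
    have hl0 : 0 < l := by linarith
    -- D(l/L)² < ε² → D l² ≤ ε² L²
    have hDl2 : (D n : ℝ) * l^2 ≤ ε^2 * L^2 := by
      have h := hsmall.le
      rw [div_pow] at h
      have h2 : (D n:ℝ) * (l^2/L^2) * L^2 ≤ ε^2 * L^2 :=
        mul_le_mul_of_nonneg_right h (by positivity)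
      calc (D n:ℝ)*l^2 = (D n:ℝ)*(l^2/L^2)*L^2 := by field_simp
        _ ≤ ε^2*L^2 := h2
    have hsqDl : Real.sqrt (D n) * l ≤ ε * L := by
      have h1 : Real.sqrt ((D n : ℝ) * l^2) ≤ Real.sqrt (ε^2 * L^2) := Real.sqrt_le_sqrt hDl2
      rwa [Real.sqrt_mul (by positivity), Real.sqrt_sq hl0.le,
        show ε^2 * L^2 = (ε*L)^2 by ring, Real.sqrt_sq (by positivity)] at h1
    have hDL2 : (D n : ℝ) ≤ L^2 := by
      have h1 : (D n : ℝ) * 1 ≤ (D n : ℝ) * l^2 := by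
        apply mul_le_mul_of_nonneg_left _ (by positivity)
        nlinarith
      have h2 : ε^2 * L^2 ≤ 1 * L^2 := by
        apply mul_le_mul_of_nonneg_right _ (by positivity)
        nlinarith
      linarith [h1, hDl2, h2]
    have hlog2D : Real.log (2*(D n : ℝ)+2) ≤ 3 * l := by
      have h1 : 2*(D n : ℝ)+2 ≤ L^3 := by nlinarith
      calc Real.log (2*(D n : ℝ)+2) ≤ Real.log (L^3) := by
            apply Real.log_le_log (by positivity) h1
        _ = 3 * l := by rw [Real.log_pow]; push_cast; rw [hldef]
    have hmain : (2*C+3) * Real.sqrt (D n) * Real.log (2*(D n : ℝ)+2) ≤ (δ/2) * L := by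
      calc (2*C+3) * Real.sqrt (D n) * Real.log (2*(D n : ℝ)+2)
          ≤ (2*C+3) * Real.sqrt (D n) * (3*l) := by
            apply mul_le_mul_of_nonneg_left hlog2D (by positivity)
        _ = 3 * (2*C+3) * (Real.sqrt (D n) * l) := by ring
        _ ≤ 3 * (2*C+3) * (ε * L) := by
            apply mul_le_mul_of_nonneg_left hsqDl (by positivity)
        _ = (3 * (2*C+3) * ε) * L := by ring
        _ ≤ (δ/2) * L := mul_le_mul_of_nonneg_right hεδ hL0.le
    have hG : ∀ k : ℕ, 1 ≤ k → k ≤ D n →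
        ((k:ℝ)+1)^(2*C*(k:ℝ)) * ((2*(k:ℝ)+1) * (2*(k:ℝ))^(2*k)) ≤ (n:ℝ)^((δ/2) * Real.sqrt k) :=
      fun k hk hkD => pow_bound hδ hC hk hkD hn2 hmain
    calc ∑ α ∈ Finset.univ.filter
          (fun α : Finset (Edge n) => 1 ≤ α.card ∧ α.card ≤ D n), (φ n α) ^ 2
        ≤ (n:ℝ)^(-δ) * (D n) := main_bound hδ (D n) hn2 (φ n) (hφ n) hG
      _ ≤ (n:ℝ)^(-δ) * L^2 := by
          apply mul_le_mul_of_nonneg_left hDL2 (by positivity)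
  -- the bound tends to zero
  have htend : Filter.Tendsto (fun n : ℕ => (n:ℝ)^(-δ) * (Real.log n)^2) atTop (nhds 0) := by
    have hhalf : 0 < δ/2 := half_pos hδ
    have h1 : Filter.Tendsto (fun x : ℝ => Real.log x / x^(δ/2)) atTop (nhds 0) :=
      (isLittleO_log_rpow_atTop hhalf).tendsto_div_nhds_zero
    have h2 : Filter.Tendsto (fun x : ℝ => (Real.log x / x^(δ/2))^2) atTop (nhds 0) := by
      have := h1.pow 2
      simpa using this
    have h3 : Filter.Tendsto (fun x : ℝ => x^(-δ) * (Real.log x)^2) atTop (nhds 0) := by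
      apply h2.congr'
      filter_upwards [eventually_gt_atTop (0:ℝ)] with x hx
      rw [div_pow, ← Real.rpow_natCast (x^(δ/2)) 2, ← Real.rpow_mul hx.le]
      norm_num
      rw [Real.rpow_neg hx.le]
      ring
    exact h3.comp tendsto_natCast_atTop_atTop
  exact squeeze_zero'
    (Filter.Eventually.of_forall (fun n => Finset.sum_nonneg (fun α _ => sq_nonneg _)))
    hbound htend
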